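/- For a normalized monotone submodular f and the generalized greedy algorithm on graph G, if y: K(G) → ℝ≥0 is a fractional clique cover (Σ_{c ∋ i} y_c ≥ 1 for every node i), then f(x^opt) ≤ (1 + Σ_c y_c) · f(x^sol). -/

import Mathlib

open Finset

/-- `c` is a clique of the digraph `E` (edges viewed as undirected). -/
def IsCliqueE {n : ℕ} (E : Fin n → Fin n → Prop) (c : Finset (Fin n)) : Prop :=
  ∀ i ∈ c, ∀ j ∈ c, i ≠ j → E i j ∨ E j i

section Helpers
variable {α : Type*} [DecidableEq α] {f : Finset α → ℝ}
  (hmono : ∀ A B : Finset α, A ⊆ B → f A ≤ f B)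
  (hsub : ∀ A B : Finset α, A ⊆ B → ∀ x ∉ B,
      f (insert x B) - f B ≤ f (insert x A) - f A)
include hmono hsub

lemma submod_sets (A : Finset α) : ∀ B C : Finset α, B ⊆ C →
    f (C ∪ A) - f C ≤ f (B ∪ A) - f B := by
  classical
  induction A using Finset.induction_on with
  | empty => intro B C hBC; simp
  | @insert x A hx ih =>
    intro B C hBC
    rw [union_insert, union_insert]
    by_cases hxC : x ∈ C ∪ A
    · rw [Finset.insert_eq_self.2 hxC]
      have h1 := ih B C hBC
      have h2 := hmono (B ∪ A) (insert x (B ∪ A)) (subset_insert _ _)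
      linarith
    · have h1 := hsub (B ∪ A) (C ∪ A) (union_subset_union_left hBC) x hxC
      have h2 := ih B C hBC
      linarith

lemma marginal_biUnion {n : ℕ} (g : Fin n → Finset α) (S : Finset α)
    (T : Finset (Fin n)) :
    f (S ∪ T.biUnion g) - f S ≤ ∑ i ∈ T, (f (S ∪ g i) - f S) := by
  classical
  induction T using Finset.induction_on with
  | empty => simp
  | @insert i T hi ih =>
    rw [biUnion_insert, sum_insert hi]
    have h1 : f ((S ∪ T.biUnion g) ∪ g i) - f (S ∪ T.biUnion g) ≤
        f (S ∪ g i) - f S :=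
      submod_sets hmono hsub (g i) S (S ∪ T.biUnion g) (subset_union_left)
    have : S ∪ (g i ∪ T.biUnion g) = (S ∪ T.biUnion g) ∪ g i := by
      rw [union_comm (g i), ← union_assoc]
    rw [this]
    linarith

end Helpers

/-- if `y` is a fractional clique cover of `G` then the generalized
greedy solution satisfies `f(x^opt) ≤ (1 + Σ_c y_c) · f(x^sol)`. -/
theorem fractional_clique_cover_bound {α : Type*} [DecidableEq α] {n : ℕ}
    (E : Fin n → Fin n → Prop) [DecidableRel E]
    (hE : ∀ i j, E i j → i < j)
    (y : Finset (Fin n) → ℝ)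
    (hy0 : ∀ c, 0 ≤ y c)
    (hyclique : ∀ c : Finset (Fin n), ¬ IsCliqueE E c → y c = 0)
    (hycover : ∀ i : Fin n, 1 ≤ ∑ c : Finset (Fin n), if i ∈ c then y c else 0)
    (f : Finset α → ℝ)
    (hnorm : f ∅ = 0)
    (hmono : ∀ A B : Finset α, A ⊆ B → f A ≤ f B)
    (hsub : ∀ A B : Finset α, A ⊆ B → ∀ x ∉ B,
      f (insert x B) - f B ≤ f (insert x A) - f A)
    (X : Fin n → Finset (Finset α))
    (sol opt : Fin n → Finset α)
    (hsolX : ∀ i, sol i ∈ X i)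
    (hgreedy : ∀ i : Fin n, ∀ z ∈ X i,
      f (z ∪ (univ.filter (fun j => E j i)).biUnion sol) ≤
        f (sol i ∪ (univ.filter (fun j => E j i)).biUnion sol))
    (hoptX : ∀ i, opt i ∈ X i)
    (hopt : ∀ z : Fin n → Finset α, (∀ i, z i ∈ X i) →
      f (univ.biUnion z) ≤ f (univ.biUnion opt)) :
    f (univ.biUnion opt) ≤
      (1 + ∑ c : Finset (Fin n), y c) * f (univ.biUnion sol) := by
  classical
  set S := univ.biUnion sol with hS
  set N : Fin n → Finset (Fin n) := fun i => univ.filter (fun j => E j i) with hN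
  set m : Fin n → ℝ := fun i =>
    f (sol i ∪ (N i).biUnion sol) - f ((N i).biUnion sol) with hm
  -- m is nonneg
  have hm0 : ∀ i, 0 ≤ m i := by
    intro i
    have := hmono ((N i).biUnion sol) (sol i ∪ (N i).biUnion sol) subset_union_right
    simp only [hm]; linarith
  -- clique telescoping
  have hclique : ∀ c : Finset (Fin n), IsCliqueE E c → ∑ i ∈ c, m i ≤ f (c.biUnion sol) := by
    intro c
    induction c using Finset.induction_on_max with
    | empty => intro _; simp [hnorm]
    | insert a s hlt ih =>
      intro hcl
      have ha : a ∉ s := fun h => lt_irrefl a (hlt a h)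
      have hscl : IsCliqueE E s := fun i hi j hj hij =>
        hcl i (mem_insert_of_mem hi) j (mem_insert_of_mem hj) hij
      have hsub' : s ⊆ N a := by
        intro b hb
        have hba : b ≠ a := ne_of_lt (hlt b hb)
        rcases hcl b (mem_insert_of_mem hb) a (mem_insert_self a s) hba with h | h
        · simp [hN, h]
        · exact absurd (hE a b h) (not_lt.2 (le_of_lt (hlt b hb)))
      have hBU : s.biUnion sol ⊆ (N a).biUnion sol :=
        biUnion_subset_biUnion_of_subset_left sol hsub'
      have h1 : m a ≤ f (s.biUnion sol ∪ sol a) - f (s.biUnion sol) := by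
        have := submod_sets hmono hsub (sol a) (s.biUnion sol) ((N a).biUnion sol) hBU
        simp only [hm]
        rw [union_comm (sol a)]
        exact this
      rw [sum_insert ha, biUnion_insert]
      have h2 := ih hscl
      have : sol a ∪ s.biUnion sol = s.biUnion sol ∪ sol a := union_comm _ _
      rw [this]
      linarith
  -- per-node bound on the sum over cliques ≤ f S
  have hcliqueS : ∀ c : Finset (Fin n), IsCliqueE E c → ∑ i ∈ c, m i ≤ f S := by
    intro c hc
    refine (hclique c hc).trans (hmono _ _ ?_)
    exact biUnion_subset_biUnion_of_subset_left sol (subset_univ c)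
  -- f(O) ≤ f S + Σ_i m i
  have hmain : f (univ.biUnion opt) ≤ f S + ∑ i : Fin n, m i := by
    have h1 : f (univ.biUnion opt) ≤ f (S ∪ univ.biUnion opt) :=
      hmono _ _ subset_union_right
    have h2 := marginal_biUnion hmono hsub opt S univ
    have h3 : ∀ i : Fin n, f (S ∪ opt i) - f S ≤ m i := by
      intro i
      have hNS : (N i).biUnion sol ⊆ S :=
        biUnion_subset_biUnion_of_subset_left sol (subset_univ _)
      have ha := submod_sets hmono hsub (opt i) ((N i).biUnion sol) S hNS
      have hb := hgreedy i (opt i) (hoptX i)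
      simp only [hm]
      rw [union_comm ((N i).biUnion sol) (opt i)] at ha
      have hb' : f (opt i ∪ (N i).biUnion sol) ≤ f (sol i ∪ (N i).biUnion sol) := hb
      linarith
    have h4 : ∑ i : Fin n, (f (S ∪ opt i) - f S) ≤ ∑ i : Fin n, m i :=
      Finset.sum_le_sum fun i _ => h3 i
    linarith
  -- Σ_i m i ≤ (Σ_c y_c) * f S
  have hfS0 : 0 ≤ f S := by have := hmono ∅ S (empty_subset _); linarith
  have hsum : ∑ i : Fin n, m i ≤ (∑ c : Finset (Fin n), y c) * f S := by
    have step1 : ∑ i : Fin n, m i ≤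
        ∑ i : Fin n, (∑ c : Finset (Fin n), if i ∈ c then y c else 0) * m i := by
      refine Finset.sum_le_sum fun i _ => ?_
      nth_rewrite 1 [← one_mul (m i)]
      exact mul_le_mul_of_nonneg_right (hycover i) (hm0 i)
    have step2 : ∑ i : Fin n, (∑ c : Finset (Fin n), if i ∈ c then y c else 0) * m i
        = ∑ c : Finset (Fin n), y c * ∑ i ∈ c, m i := by
      simp_rw [Finset.sum_mul, ite_mul, zero_mul]
      rw [Finset.sum_comm]
      refine Finset.sum_congr rfl fun c _ => ?_
      rw [Finset.mul_sum, Finset.sum_ite_mem, univ_inter]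
    have step3 : ∑ c : Finset (Fin n), y c * ∑ i ∈ c, m i ≤
        ∑ c : Finset (Fin n), y c * f S := by
      refine Finset.sum_le_sum fun c _ => ?_
      by_cases hc : IsCliqueE E c
      · exact mul_le_mul_of_nonneg_left (hcliqueS c hc) (hy0 c)
      · simp [hyclique c hc]
    rw [← Finset.sum_mul] at step3
    linarith
  have : (1 + ∑ c : Finset (Fin n), y c) * f S
      = f S + (∑ c : Finset (Fin n), y c) * f S := by ring
  rw [this]
  linarith
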